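/- Let N ≥ 1 be an integer, let F : ℂ^N → ℂ^N be quadratic, i.e. F(z) = B(z,z) + A(z) for a symmetric bilinear map B : ℂ^N × ℂ^N → ℂ^N and a linear map A : ℂ^N → ℂ^N, and let R > 0. Then for every λ ≥ 1 and α ∈ [0,1] there exists a constant D > 0, depending only on N, R, the operator norms of A and B, λ and α, such that for all twice continuously differentiable y₁, y₂, h : [0,1] → ℂ^N with ‖y₁‖_{H²} ≤ R and ‖y₂‖_{H²} ≤ R, one has |L_{λ,α,y₁}(h) − L_{λ,α,y₂}(h)| ≤ D ‖y₁ − y₂‖_{H²} ‖h‖_{H²}. (Theorem 4.2, Lipschitz continuity of the Fréchet derivative of J_{λ,α}.) -/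

import Mathlib

open MeasureTheory
open intervalIntegral

/-- The `H²(0,1)` norm of a function `g : [0,1] → ℂ^N`:
`‖g‖_{H²}² = ∫₀¹ (|g|² + |g'|² + |g''|²) dx`. -/
noncomputable def H2norm {N : ℕ} (g : ℝ → EuclideanSpace ℂ (Fin N)) : ℝ :=
  Real.sqrt (∫ x in (0:ℝ)..1,
    (‖g x‖ ^ 2 + ‖deriv g x‖ ^ 2 + ‖deriv (deriv g) x‖ ^ 2))

/-- The real `H²(0,1)` inner ℂ product
`⟨g,h⟩_{H²} = ∫₀¹ Re(⟨g,h⟩ + ⟨g',h'⟩ + ⟨g'',h''⟩) dx`. -/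
noncomputable def H2inner {N : ℕ} (g h : ℝ → EuclideanSpace ℂ (Fin N)) : ℝ :=
  ∫ x in (0:ℝ)..1,
    (((inner ℂ (g x) (h x) : ℂ)).re + ((inner ℂ (deriv g x) (deriv h x) : ℂ)).re
      + ((inner ℂ (deriv (deriv g) x) (deriv (deriv h) x) : ℂ)).re)

/-- The weighted Tikhonov-like functional
`J_{λ,α}(y) = e^{2λ} ∫₀¹ |y'' + F(y')|² e^{-2λx} dx + α‖y‖_{H²}²`. -/
noncomputable def Jfun {N : ℕ}
    (F : EuclideanSpace ℂ (Fin N) → EuclideanSpace ℂ (Fin N))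
    (lam α : ℝ) (y : ℝ → EuclideanSpace ℂ (Fin N)) : ℝ :=
  Real.exp (2 * lam) *
      (∫ x in (0:ℝ)..1, ‖deriv (deriv y) x + F (deriv y x)‖ ^ 2 * Real.exp (-2 * lam * x))
    + α * (H2norm y) ^ 2

/-- The linearization (Fréchet derivative) of `J_{λ,α}` at `y` applied to `h`, where
`F(z) = B(z,z) + A(z)`:
`L_{λ,α,y}(h) = e^{2λ} ∫₀¹ 2Re⟨h'' + 2B(y',h') + A(h'), y'' + F(y')⟩ e^{-2λx} dx
  + 2α⟨y,h⟩_{H²}`. -/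
noncomputable def Lfun {N : ℕ}
    (B : EuclideanSpace ℂ (Fin N) →L[ℂ] EuclideanSpace ℂ (Fin N) →L[ℂ] EuclideanSpace ℂ (Fin N))
    (A : EuclideanSpace ℂ (Fin N) →L[ℂ] EuclideanSpace ℂ (Fin N))
    (lam α : ℝ) (y h : ℝ → EuclideanSpace ℂ (Fin N)) : ℝ :=
  Real.exp (2 * lam) *
      (∫ x in (0:ℝ)..1,
        2 * ((inner ℂ (deriv (deriv h) x + (2:ℂ) • B (deriv y x) (deriv h x) + A (deriv h x))
              (deriv (deriv y) x + (B (deriv y x) (deriv y x) + A (deriv y x))) : ℂ)).re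
          * Real.exp (-2 * lam * x))
    + 2 * α * H2inner y h

section AuxLemmas

lemma cs_integral' (f g : ℝ → ℝ) (hf : Continuous f) (hg : Continuous g) :
    ∫ x in (0:ℝ)..1, f x * g x ≤
      Real.sqrt (∫ x in (0:ℝ)..1, f x ^ 2) * Real.sqrt (∫ x in (0:ℝ)..1, g x ^ 2) := by
  set a2 := ∫ x in (0:ℝ)..1, f x ^ 2 with ha2
  set b2 := ∫ x in (0:ℝ)..1, g x ^ 2 with hb2
  set I := ∫ x in (0:ℝ)..1, f x * g x with hI
  have hfi : IntervalIntegrable (fun x => f x ^ 2) volume 0 1 := (hf.pow 2).intervalIntegrable _ _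
  have hgi : IntervalIntegrable (fun x => g x ^ 2) volume 0 1 := (hg.pow 2).intervalIntegrable _ _
  have hfgi : IntervalIntegrable (fun x => f x * g x) volume 0 1 :=
    (hf.mul hg).intervalIntegrable _ _
  have ha2nn : 0 ≤ a2 := integral_nonneg (by norm_num) (fun x _ => sq_nonneg _)
  have hb2nn : 0 ≤ b2 := integral_nonneg (by norm_num) (fun x _ => sq_nonneg _)
  have key : ∀ t : ℝ, 0 ≤ a2 * (t * t) + (2 * I) * t + b2 := by
    intro t
    have expand : (fun x => (t * f x + g x) ^ 2)
        = fun x => (t * t) * f x ^ 2 + (2 * t) * (f x * g x) + g x ^ 2 := by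
      funext x; ring
    have hval : (∫ x in (0:ℝ)..1, (t * f x + g x) ^ 2)
        = (t * t) * a2 + (2 * t) * I + b2 := by
      rw [expand, intervalIntegral.integral_add ((hfi.const_mul _).add (hfgi.const_mul _)) hgi,
        intervalIntegral.integral_add (hfi.const_mul _) (hfgi.const_mul _),
        intervalIntegral.integral_const_mul, intervalIntegral.integral_const_mul]
    have hnn : 0 ≤ ∫ x in (0:ℝ)..1, (t * f x + g x) ^ 2 :=
      integral_nonneg (by norm_num) (fun x _ => sq_nonneg _)
    rw [hval] at hnn; nlinarith
  have hd := discrim_le_zero key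
  rw [discrim] at hd
  have hI2 : I ^ 2 ≤ a2 * b2 := by nlinarith
  calc I ≤ |I| := le_abs_self _
    _ = Real.sqrt (I ^ 2) := (Real.sqrt_sq_eq_abs I).symm
    _ ≤ Real.sqrt (a2 * b2) := Real.sqrt_le_sqrt hI2
    _ = Real.sqrt a2 * Real.sqrt b2 := Real.sqrt_mul ha2nn _

lemma cs_bound' {E : Type*} [NormedAddCommGroup E] {E' : Type*} [NormedAddCommGroup E']
    (f : ℝ → E) (g : ℝ → E')
    (hf : Continuous f) (hg : Continuous g) (Cf Cg : ℝ) (hCf : 0 ≤ Cf) (hCg : 0 ≤ Cg)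
    (hf2 : (∫ x in (0:ℝ)..1, ‖f x‖ ^ 2) ≤ Cf ^ 2)
    (hg2 : (∫ x in (0:ℝ)..1, ‖g x‖ ^ 2) ≤ Cg ^ 2) :
    (∫ x in (0:ℝ)..1, ‖f x‖ * ‖g x‖) ≤ Cf * Cg := by
  have h := cs_integral' (fun x => ‖f x‖) (fun x => ‖g x‖) hf.norm hg.norm
  have h1 : Real.sqrt (∫ x in (0:ℝ)..1, ‖f x‖ ^ 2) ≤ Cf := by
    rw [show Cf = Real.sqrt (Cf ^ 2) by rw [Real.sqrt_sq hCf]]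
    exact Real.sqrt_le_sqrt hf2
  have h2 : Real.sqrt (∫ x in (0:ℝ)..1, ‖g x‖ ^ 2) ≤ Cg := by
    rw [show Cg = Real.sqrt (Cg ^ 2) by rw [Real.sqrt_sq hCg]]
    exact Real.sqrt_le_sqrt hg2
  calc (∫ x in (0:ℝ)..1, ‖f x‖ * ‖g x‖)
      ≤ Real.sqrt (∫ x in (0:ℝ)..1, ‖f x‖ ^ 2) * Real.sqrt (∫ x in (0:ℝ)..1, ‖g x‖ ^ 2) := h
    _ ≤ Cf * Cg := mul_le_mul h1 h2 (Real.sqrt_nonneg _) hCf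

lemma l1_bound' {E : Type*} [NormedAddCommGroup E] (f : ℝ → E)
    (hf : Continuous f) (Cf : ℝ) (hCf : 0 ≤ Cf)
    (hf2 : (∫ x in (0:ℝ)..1, ‖f x‖ ^ 2) ≤ Cf ^ 2) :
    (∫ x in (0:ℝ)..1, ‖f x‖) ≤ Cf := by
  have h := cs_bound' f (fun _ => (1:ℝ)) hf continuous_const Cf 1 hCf zero_le_one hf2
    (by norm_num)
  simpa using h

lemma abs_integral_le_of_le' (f g : ℝ → ℝ) (hf : Continuous f) (hg : Continuous g)
    (hbd : ∀ x ∈ Set.Icc (0:ℝ) 1, |f x| ≤ g x) :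
    |∫ x in (0:ℝ)..1, f x| ≤ ∫ x in (0:ℝ)..1, g x := by
  calc |∫ x in (0:ℝ)..1, f x| ≤ ∫ x in (0:ℝ)..1, |f x| :=
        intervalIntegral.abs_integral_le_integral_abs zero_le_one
    _ ≤ ∫ x in (0:ℝ)..1, g x :=
        integral_mono_on zero_le_one (hf.abs.intervalIntegrable _ _)
          (hg.intervalIntegrable _ _) hbd

lemma c2_split' {E : Type*} [NormedAddCommGroup E] [NormedSpace ℝ E]
    (f : ℝ → E) (hf : ContDiff ℝ 2 f) : Differentiable ℝ f ∧ ContDiff ℝ 1 (deriv f) := by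
  rw [show (2 : WithTop ℕ∞) = 1 + 1 from rfl] at hf
  rw [contDiff_succ_iff_deriv] at hf
  exact ⟨hf.1, hf.2.2⟩

lemma supbound' {N : ℕ} (f : ℝ → EuclideanSpace ℂ (Fin N)) (hf : ContDiff ℝ 1 f) {x : ℝ}
    (hx : x ∈ Set.Icc (0:ℝ) 1) :
    ‖f x‖ ^ 2 ≤ 2 * ∫ t in (0:ℝ)..1, (‖f t‖ ^ 2 + ‖deriv f t‖ ^ 2) := by
  have hdiff : Differentiable ℝ f := hf.differentiable one_ne_zero
  have hcf : Continuous f := hf.continuous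
  have hcf' : Continuous (deriv f) := hf.continuous_deriv le_rfl
  set φ : ℝ → ℝ := fun t => ‖f t‖ ^ 2 with hφ
  set φ' : ℝ → ℝ := fun t => 2 * ((inner ℂ (f t) (deriv f t) : ℂ)).re with hφ'
  have hcφ : Continuous φ := (hcf.norm.pow 2)
  have hcφ' : Continuous φ' := by
    apply continuous_const.mul
    exact Complex.continuous_re.comp ((hcf.inner hcf'))
  have hder : ∀ t : ℝ, HasDerivAt φ (φ' t) t := by
    intro t
    have h1 : HasDerivAt (fun s => (inner ℂ (f s) (f s) : ℂ))
        ((inner ℂ (f t) (deriv f t) : ℂ) + (inner ℂ (deriv f t) (f t) : ℂ)) t :=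
      HasDerivAt.inner ℂ (hdiff t).hasDerivAt (hdiff t).hasDerivAt
    have h2 := (Complex.reCLM.hasFDerivAt.comp_hasDerivAt t h1)
    have h3 : Complex.reCLM ((inner ℂ (f t) (deriv f t) : ℂ) + (inner ℂ (deriv f t) (f t) : ℂ))
        = φ' t := by
      simp only [map_add, Complex.reCLM_apply, hφ']
      rw [← inner_conj_symm (deriv f t) (f t)]
      rw [Complex.conj_re]
      ring
    rw [h3] at h2
    have h4 : (⇑Complex.reCLM ∘ fun s => (inner ℂ (f s) (f s) : ℂ)) = φ := by
      funext s
      simp only [Function.comp_apply, Complex.reCLM_apply, hφ]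
      have := inner_self_eq_norm_sq (𝕜 := ℂ) (f s)
      simpa [RCLike.re_to_complex] using this
    rwa [h4] at h2
  have hbnd : ∀ t : ℝ, |φ' t| ≤ ‖f t‖ ^ 2 + ‖deriv f t‖ ^ 2 := by
    intro t
    have h1 : |((inner ℂ (f t) (deriv f t) : ℂ)).re| ≤ ‖f t‖ * ‖deriv f t‖ := by
      refine le_trans ?_ (norm_inner_le_norm (𝕜 := ℂ) (f t) (deriv f t))
      exact Complex.abs_re_le_norm _
    have h2 : |φ' t| = 2 * |((inner ℂ (f t) (deriv f t) : ℂ)).re| := by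
      rw [hφ', abs_mul]; norm_num
    nlinarith [sq_nonneg (‖f t‖ - ‖deriv f t‖), norm_nonneg (f t), norm_nonneg (deriv f t)]
  have hiφ : IntervalIntegrable φ volume 0 1 := hcφ.intervalIntegrable _ _
  have hiφ' : ∀ a b : ℝ, IntervalIntegrable φ' volume a b := fun a b =>
    hcφ'.intervalIntegrable _ _
  have hisum : IntervalIntegrable (fun t => ‖f t‖ ^ 2 + ‖deriv f t‖ ^ 2) volume 0 1 :=
    ((hcf.norm.pow 2).add (hcf'.norm.pow 2)).intervalIntegrable _ _
  obtain ⟨x₀, hx₀, hmin⟩ := isCompact_Icc.exists_isMinOn (Set.nonempty_Icc.2 zero_le_one)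
    hcφ.continuousOn
  have hmean : φ x₀ ≤ (∫ t in (0:ℝ)..1, φ t) := by
    have : (∫ t in (0:ℝ)..1, φ x₀) ≤ ∫ t in (0:ℝ)..1, φ t :=
      integral_mono_on zero_le_one (intervalIntegrable_const) hiφ (fun t ht => hmin ht)
    simpa using this
  have hftc : φ x - φ x₀ = (∫ t in x₀..x, φ' t) :=
    (integral_eq_sub_of_hasDerivAt (fun t _ => hder t) (hiφ' x₀ x)).symm
  have habs : |∫ t in x₀..x, φ' t| ≤ (∫ t in (0:ℝ)..1, |φ' t|) := by
    have h1 : |∫ t in x₀..x, φ' t| ≤ abs (∫ t in x₀..x, |φ' t|) := by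
      simpa using intervalIntegral.norm_integral_le_abs_integral_norm (f := φ') (a := x₀) (b := x)
    have hsub : Set.uIoc x₀ x ⊆ Set.uIoc (0:ℝ) 1 := by
      rw [Set.uIoc_of_le zero_le_one]
      rintro t ht
      rcases Set.mem_uIoc.1 ht with h | h
      · exact ⟨lt_of_le_of_lt hx₀.1 h.1, h.2.trans hx.2⟩
      · exact ⟨lt_of_le_of_lt hx.1 h.1, h.2.trans hx₀.2⟩
    have h2 : abs (∫ t in x₀..x, |φ' t|) ≤ abs (∫ t in (0:ℝ)..1, |φ' t|) :=
      abs_integral_mono_interval hsub (Filter.Eventually.of_forall (fun t => abs_nonneg _))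
        ((hcφ'.abs).intervalIntegrable _ _)
    have h3 : abs (∫ t in (0:ℝ)..1, |φ' t|) = ∫ t in (0:ℝ)..1, |φ' t| :=
      abs_of_nonneg (integral_nonneg zero_le_one (fun t _ => abs_nonneg _))
    calc |∫ t in x₀..x, φ' t| ≤ abs (∫ t in x₀..x, |φ' t|) := h1
      _ ≤ abs (∫ t in (0:ℝ)..1, |φ' t|) := h2
      _ = _ := h3
  have hintabs : (∫ t in (0:ℝ)..1, |φ' t|) ≤ ∫ t in (0:ℝ)..1, (‖f t‖ ^ 2 + ‖deriv f t‖ ^ 2) :=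
    integral_mono_on zero_le_one ((hcφ'.abs).intervalIntegrable _ _) hisum
      (fun t _ => hbnd t)
  have hφint : (∫ t in (0:ℝ)..1, φ t) ≤ ∫ t in (0:ℝ)..1, (‖f t‖ ^ 2 + ‖deriv f t‖ ^ 2) :=
    integral_mono_on zero_le_one hiφ hisum (fun t _ => by
      simp only [hφ]; nlinarith [sq_nonneg ‖deriv f t‖])
  have hup : φ x ≤ φ x₀ + |∫ t in x₀..x, φ' t| := by
    nlinarith [le_abs_self (∫ t in x₀..x, φ' t), hftc]
  calc ‖f x‖ ^ 2 = φ x := rfl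
    _ ≤ φ x₀ + |∫ t in x₀..x, φ' t| := hup
    _ ≤ (∫ t in (0:ℝ)..1, φ t) + ∫ t in (0:ℝ)..1, |φ' t| := add_le_add hmean habs
    _ ≤ (∫ t in (0:ℝ)..1, (‖f t‖ ^ 2 + ‖deriv f t‖ ^ 2))
        + ∫ t in (0:ℝ)..1, (‖f t‖ ^ 2 + ‖deriv f t‖ ^ 2) := add_le_add hφint hintabs
    _ = 2 * ∫ t in (0:ℝ)..1, (‖f t‖ ^ 2 + ‖deriv f t‖ ^ 2) := by ring

end AuxLemmas

section H2Lemmas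
variable {N : ℕ}

lemma l1_bound'' : True := trivial

lemma H2norm_nonneg (g : ℝ → EuclideanSpace ℂ (Fin N)) : 0 ≤ H2norm g := Real.sqrt_nonneg _

lemma H2norm_sq (g : ℝ → EuclideanSpace ℂ (Fin N)) :
    H2norm g ^ 2 = ∫ x in (0:ℝ)..1,
      (‖g x‖ ^ 2 + ‖deriv g x‖ ^ 2 + ‖deriv (deriv g) x‖ ^ 2) :=
  Real.sq_sqrt (integral_nonneg zero_le_one (fun x _ => by positivity))

lemma H2_part0 (g : ℝ → EuclideanSpace ℂ (Fin N)) (h0 : Continuous g)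
    (h1 : Continuous (deriv g)) (h2 : Continuous (deriv (deriv g))) :
    (∫ x in (0:ℝ)..1, ‖g x‖ ^ 2) ≤ H2norm g ^ 2 := by
  rw [H2norm_sq]
  exact intervalIntegral.integral_mono_on zero_le_one ((h0.norm.pow 2).intervalIntegrable _ _)
    (((h0.norm.pow 2).add ((h1.norm.pow 2)) |>.add ((h2.norm.pow 2))).intervalIntegrable _ _)
    (fun x _ => by nlinarith [sq_nonneg ‖deriv g x‖, sq_nonneg ‖deriv (deriv g) x‖])

lemma H2_part1 (g : ℝ → EuclideanSpace ℂ (Fin N)) (h0 : Continuous g)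
    (h1 : Continuous (deriv g)) (h2 : Continuous (deriv (deriv g))) :
    (∫ x in (0:ℝ)..1, ‖deriv g x‖ ^ 2) ≤ H2norm g ^ 2 := by
  rw [H2norm_sq]
  exact intervalIntegral.integral_mono_on zero_le_one ((h1.norm.pow 2).intervalIntegrable _ _)
    (((h0.norm.pow 2).add ((h1.norm.pow 2)) |>.add ((h2.norm.pow 2))).intervalIntegrable _ _)
    (fun x _ => by nlinarith [sq_nonneg ‖g x‖, sq_nonneg ‖deriv (deriv g) x‖])

lemma H2_part2 (g : ℝ → EuclideanSpace ℂ (Fin N)) (h0 : Continuous g)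
    (h1 : Continuous (deriv g)) (h2 : Continuous (deriv (deriv g))) :
    (∫ x in (0:ℝ)..1, ‖deriv (deriv g) x‖ ^ 2) ≤ H2norm g ^ 2 := by
  rw [H2norm_sq]
  exact intervalIntegral.integral_mono_on zero_le_one ((h2.norm.pow 2).intervalIntegrable _ _)
    (((h0.norm.pow 2).add ((h1.norm.pow 2)) |>.add ((h2.norm.pow 2))).intervalIntegrable _ _)
    (fun x _ => by nlinarith [sq_nonneg ‖g x‖, sq_nonneg ‖deriv g x‖])

end H2Lemmas

lemma deriv_sup {N : ℕ} (g : ℝ → EuclideanSpace ℂ (Fin N)) (hg : ContDiff ℝ 2 g) {x : ℝ}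
    (hx : x ∈ Set.Icc (0:ℝ) 1) : ‖deriv g x‖ ≤ Real.sqrt 2 * H2norm g := by
  obtain ⟨hd, h1⟩ := c2_split' g hg
  have hc0 : Continuous g := hg.continuous
  have hc1 : Continuous (deriv g) := h1.continuous
  have hc2 : Continuous (deriv (deriv g)) := h1.continuous_deriv le_rfl
  have hs := supbound' (deriv g) h1 hx
  have hint : (∫ t in (0:ℝ)..1, (‖deriv g t‖ ^ 2 + ‖deriv (deriv g) t‖ ^ 2)) ≤ H2norm g ^ 2 := by
    rw [H2norm_sq]
    exact intervalIntegral.integral_mono_on zero_le_one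
      (((hc1.norm.pow 2).add (hc2.norm.pow 2)).intervalIntegrable _ _)
      (((hc0.norm.pow 2).add ((hc1.norm.pow 2)) |>.add ((hc2.norm.pow 2))).intervalIntegrable _ _)
      (fun t _ => by nlinarith [sq_nonneg ‖g t‖])
  have hkey : ‖deriv g x‖ ^ 2 ≤ 2 * H2norm g ^ 2 := by nlinarith
  have hnn : 0 ≤ Real.sqrt 2 * H2norm g := mul_nonneg (Real.sqrt_nonneg _) (H2norm_nonneg g)
  have hsq : (Real.sqrt 2) ^ 2 = 2 := Real.sq_sqrt (by norm_num)
  nlinarith [norm_nonneg (deriv g x), hnn, hkey, hsq,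
    sq_nonneg (Real.sqrt 2 * H2norm g - ‖deriv g x‖),
    sq_nonneg (Real.sqrt 2 * H2norm g + ‖deriv g x‖)]

set_option maxHeartbeats 1000000

/-- **Theorem 4.2 (Lipschitz continuity of the Fréchet derivative of `J_{λ,α}`).**
For every `λ ≥ 1` and `α ∈ [0,1]` there exists `D > 0` such that for all `C²` functions
`y₁, y₂, h : [0,1] → ℂ^N` with `‖y₁‖_{H²} ≤ R`, `‖y₂‖_{H²} ≤ R`:
`|L_{λ,α,y₁}(h) − L_{λ,α,y₂}(h)| ≤ D ‖y₁ − y₂‖_{H²} ‖h‖_{H²}`. -/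
theorem lipschitz_frechet_derivative {N : ℕ} (hN : 1 ≤ N)
    (B : EuclideanSpace ℂ (Fin N) →L[ℂ] EuclideanSpace ℂ (Fin N) →L[ℂ] EuclideanSpace ℂ (Fin N))
    (hBsymm : ∀ z w, B z w = B w z)
    (A : EuclideanSpace ℂ (Fin N) →L[ℂ] EuclideanSpace ℂ (Fin N))
    (R : ℝ) (hR : 0 < R) :
    ∀ lam : ℝ, 1 ≤ lam → ∀ α ∈ Set.Icc (0:ℝ) 1,
      ∃ D : ℝ, 0 < D ∧
        ∀ y₁ y₂ h : ℝ → EuclideanSpace ℂ (Fin N),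
          ContDiff ℝ 2 y₁ → ContDiff ℝ 2 y₂ → ContDiff ℝ 2 h →
          H2norm y₁ ≤ R → H2norm y₂ ≤ R →
          |Lfun B A lam α y₁ h - Lfun B A lam α y₂ h|
            ≤ D * H2norm (y₁ - y₂) * H2norm h := by
  intro lam hlam α hα
  have hα0 := hα.1
  have hα1 := hα.2
  have hnB : (0:ℝ) ≤ ‖B‖ := norm_nonneg B
  have hnA : (0:ℝ) ≤ ‖A‖ := norm_nonneg A
  set nB := ‖B‖ with hnBdef
  set nA := ‖A‖ with hnAdef
  have hs2 : 0 ≤ Real.sqrt 2 := Real.sqrt_nonneg 2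
  have hsq2 : Real.sqrt 2 * Real.sqrt 2 = 2 := Real.mul_self_sqrt (by norm_num)
  set SR : ℝ := Real.sqrt 2 * R with hSRdef
  have hSR : 0 ≤ SR := mul_nonneg hs2 hR.le
  set c0 : ℝ := nB * SR ^ 2 + nA * SR with hc0def
  set c1 : ℝ := 2 * nB * SR + nA with hc1def
  have hc0 : 0 ≤ c0 := add_nonneg (mul_nonneg hnB (sq_nonneg _)) (mul_nonneg hnA hSR)
  have hc1 : 0 ≤ c1 := add_nonneg (mul_nonneg (by linarith) hSR) hnA
  set K : ℝ := 8 * nB * (R + c0) + 2 + 4 * Real.sqrt 2 * c1 + 4 * c1 ^ 2 with hKdef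
  have hK : 0 ≤ K := by
    have k1 : 0 ≤ 8 * nB * (R + c0) := by
      have := mul_nonneg hnB (add_nonneg hR.le hc0); linarith
    have k2 : 0 ≤ 4 * Real.sqrt 2 * c1 := by
      have := mul_nonneg hs2 hc1; linarith
    have k3 : 0 ≤ 4 * c1 ^ 2 := by positivity
    linarith only [k1, k2, k3, hKdef]
  have hexp : (0:ℝ) < Real.exp (2 * lam) := Real.exp_pos _
  refine ⟨Real.exp (2 * lam) * K + 7, by
    have hek := mul_nonneg hexp.le hK; linarith only [hek], ?_⟩
  intro y₁ y₂ h hy₁ hy₂ hh hR₁ hR₂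
  obtain ⟨hd1, hC1⟩ := c2_split' y₁ hy₁
  obtain ⟨hd2, hC2⟩ := c2_split' y₂ hy₂
  obtain ⟨hdh, hCh⟩ := c2_split' h hh
  set u : ℝ → EuclideanSpace ℂ (Fin N) := y₁ - y₂ with hudef
  have hu : ContDiff ℝ 2 u := hy₁.sub hy₂
  obtain ⟨hdu, hCu⟩ := c2_split' u hu
  -- continuity of everything
  have hcy1 : Continuous y₁ := hy₁.continuous
  have hcy2 : Continuous y₂ := hy₂.continuous
  have hch : Continuous h := hh.continuous
  have hcu : Continuous u := hu.continuous
  have hcy1' : Continuous (deriv y₁) := hC1.continuous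
  have hcy2' : Continuous (deriv y₂) := hC2.continuous
  have hch' : Continuous (deriv h) := hCh.continuous
  have hcu' : Continuous (deriv u) := hCu.continuous
  have hcy1'' : Continuous (deriv (deriv y₁)) := hC1.continuous_deriv le_rfl
  have hcy2'' : Continuous (deriv (deriv y₂)) := hC2.continuous_deriv le_rfl
  have hch'' : Continuous (deriv (deriv h)) := hCh.continuous_deriv le_rfl
  have hcu'' : Continuous (deriv (deriv u)) := hCu.continuous_deriv le_rfl
  -- derivative identities
  have hud : ∀ x, deriv u x = deriv y₁ x - deriv y₂ x := fun x => deriv_sub (hd1 x) (hd2 x)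
  have hudd : ∀ x, deriv (deriv u) x = deriv (deriv y₁) x - deriv (deriv y₂) x := by
    intro x
    have e1 : deriv u = fun t => deriv y₁ t - deriv y₂ t := funext hud
    rw [e1]
    exact deriv_fun_sub (hC1.differentiable one_ne_zero x) (hC2.differentiable one_ne_zero x)
  -- H² norms
  set Hu : ℝ := H2norm u with hHudef
  set Hh : ℝ := H2norm h with hHhdef
  have hHu0 : 0 ≤ Hu := H2norm_nonneg u
  have hHh0 : 0 ≤ Hh := H2norm_nonneg h
  set su : ℝ := Real.sqrt 2 * Hu with hsudef
  set sh : ℝ := Real.sqrt 2 * Hh with hshdef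
  have hsu0 : 0 ≤ su := mul_nonneg hs2 hHu0
  have hsh0 : 0 ≤ sh := mul_nonneg hs2 hHh0
  -- sup bounds on first derivatives
  have hby1 : ∀ x ∈ Set.Icc (0:ℝ) 1, ‖deriv y₁ x‖ ≤ SR := fun x hx =>
    le_trans (deriv_sup y₁ hy₁ hx) (by rw [hSRdef]; exact mul_le_mul_of_nonneg_left hR₁ hs2)
  have hby2 : ∀ x ∈ Set.Icc (0:ℝ) 1, ‖deriv y₂ x‖ ≤ SR := fun x hx =>
    le_trans (deriv_sup y₂ hy₂ hx) (by rw [hSRdef]; exact mul_le_mul_of_nonneg_left hR₂ hs2)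
  have hbh : ∀ x ∈ Set.Icc (0:ℝ) 1, ‖deriv h x‖ ≤ sh := fun x hx => deriv_sup h hh hx
  have hbu : ∀ x ∈ Set.Icc (0:ℝ) 1, ‖deriv u x‖ ≤ su := fun x hx => deriv_sup u hu hx
  -- L² bounds
  have hy1dd2 : (∫ x in (0:ℝ)..1, ‖deriv (deriv y₁) x‖ ^ 2) ≤ R ^ 2 :=
    le_trans (H2_part2 y₁ hcy1 hcy1' hcy1'') (pow_le_pow_left₀ (H2norm_nonneg y₁) hR₁ 2)
  have hhdd2 : (∫ x in (0:ℝ)..1, ‖deriv (deriv h) x‖ ^ 2) ≤ Hh ^ 2 :=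
    H2_part2 h hch hch' hch''
  have hudd2 : (∫ x in (0:ℝ)..1, ‖deriv (deriv u) x‖ ^ 2) ≤ Hu ^ 2 :=
    H2_part2 u hcu hcu' hcu''
  have hu02 : (∫ x in (0:ℝ)..1, ‖u x‖ ^ 2) ≤ Hu ^ 2 := H2_part0 u hcu hcu' hcu''
  have hu12 : (∫ x in (0:ℝ)..1, ‖deriv u x‖ ^ 2) ≤ Hu ^ 2 := H2_part1 u hcu hcu' hcu''
  have hh02 : (∫ x in (0:ℝ)..1, ‖h x‖ ^ 2) ≤ Hh ^ 2 := H2_part0 h hch hch' hch''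
  have hh12 : (∫ x in (0:ℝ)..1, ‖deriv h x‖ ^ 2) ≤ Hh ^ 2 := H2_part1 h hch hch' hch''
  -- L¹ bounds
  have hIy1 : (∫ x in (0:ℝ)..1, ‖deriv (deriv y₁) x‖) ≤ R := l1_bound' _ hcy1'' R hR.le hy1dd2
  have hIh : (∫ x in (0:ℝ)..1, ‖deriv (deriv h) x‖) ≤ Hh := l1_bound' _ hch'' Hh hHh0 hhdd2
  have hIu : (∫ x in (0:ℝ)..1, ‖deriv (deriv u) x‖) ≤ Hu := l1_bound' _ hcu'' Hu hHu0 hudd2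
  have hIhu : (∫ x in (0:ℝ)..1, ‖deriv (deriv h) x‖ * ‖deriv (deriv u) x‖) ≤ Hh * Hu :=
    cs_bound' _ _ hch'' hcu'' Hh Hu hHh0 hHu0 hhdd2 hudd2
  -- the algebraic combination lemma
  have halg : ∀ I₁ I₂ J₁ J₂ : ℝ, |I₁ - I₂| ≤ K * Hu * Hh → |J₁ - J₂| ≤ 3 * Hu * Hh →
      |(Real.exp (2 * lam) * I₁ + 2 * α * J₁) - (Real.exp (2 * lam) * I₂ + 2 * α * J₂)|
        ≤ (Real.exp (2 * lam) * K + 7) * Hu * Hh := by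
    intro I₁ I₂ J₁ J₂ h1 h2
    have e1 : Real.exp (2 * lam) * I₁ + 2 * α * J₁ - (Real.exp (2 * lam) * I₂ + 2 * α * J₂)
        = Real.exp (2 * lam) * (I₁ - I₂) + 2 * α * (J₁ - J₂) := by ring
    rw [e1]
    have h3 : |Real.exp (2 * lam) * (I₁ - I₂) + 2 * α * (J₁ - J₂)|
        ≤ |Real.exp (2 * lam) * (I₁ - I₂)| + |2 * α * (J₁ - J₂)| := abs_add_le _ _
    have h4 : |Real.exp (2 * lam) * (I₁ - I₂)| = Real.exp (2 * lam) * |I₁ - I₂| := by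
      rw [abs_mul, abs_of_pos hexp]
    have h5 : |2 * α * (J₁ - J₂)| = 2 * α * |J₁ - J₂| := by
      rw [abs_mul, abs_of_nonneg (by linarith only [hα0] : (0:ℝ) ≤ 2 * α)]
    have h6 : Real.exp (2 * lam) * |I₁ - I₂| ≤ Real.exp (2 * lam) * (K * Hu * Hh) :=
      mul_le_mul_of_nonneg_left h1 hexp.le
    have h7 : 2 * α * |J₁ - J₂| ≤ 2 * α * (3 * Hu * Hh) :=
      mul_le_mul_of_nonneg_left h2 (by linarith only [hα0])
    have h8 : 0 ≤ Hu * Hh := mul_nonneg hHu0 hHh0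
    calc |Real.exp (2 * lam) * (I₁ - I₂) + 2 * α * (J₁ - J₂)|
        ≤ Real.exp (2 * lam) * |I₁ - I₂| + 2 * α * |J₁ - J₂| := by rw [← h4, ← h5]; exact h3
      _ ≤ Real.exp (2 * lam) * (K * Hu * Hh) + 2 * α * (3 * Hu * Hh) := add_le_add h6 h7
      _ = (Real.exp (2 * lam) * K) * (Hu * Hh) + (6 * α) * (Hu * Hh) := by ring
      _ ≤ (Real.exp (2 * lam) * K) * (Hu * Hh) + 7 * (Hu * Hh) :=
          add_le_add le_rfl (mul_le_mul_of_nonneg_right (by linarith only [hα1]) h8)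
      _ = (Real.exp (2 * lam) * K + 7) * Hu * Hh := by ring
  -- Claim B : H2inner difference
  have hint1 : Continuous (fun x => ((inner ℂ (y₁ x) (h x) : ℂ)).re
      + ((inner ℂ (deriv y₁ x) (deriv h x) : ℂ)).re
      + ((inner ℂ (deriv (deriv y₁) x) (deriv (deriv h) x) : ℂ)).re) :=
    ((Complex.continuous_re.comp (hcy1.inner hch)).add
      (Complex.continuous_re.comp (hcy1'.inner hch'))).add
      (Complex.continuous_re.comp (hcy1''.inner hch''))
  have hint2 : Continuous (fun x => ((inner ℂ (y₂ x) (h x) : ℂ)).re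
      + ((inner ℂ (deriv y₂ x) (deriv h x) : ℂ)).re
      + ((inner ℂ (deriv (deriv y₂) x) (deriv (deriv h) x) : ℂ)).re) :=
    ((Complex.continuous_re.comp (hcy2.inner hch)).add
      (Complex.continuous_re.comp (hcy2'.inner hch'))).add
      (Complex.continuous_re.comp (hcy2''.inner hch''))
  have claimB : |H2inner y₁ h - H2inner y₂ h| ≤ 3 * Hu * Hh := by
    have hsub : H2inner y₁ h - H2inner y₂ h = ∫ x in (0:ℝ)..1,
        ((((inner ℂ (y₁ x) (h x) : ℂ)).re + ((inner ℂ (deriv y₁ x) (deriv h x) : ℂ)).re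
          + ((inner ℂ (deriv (deriv y₁) x) (deriv (deriv h) x) : ℂ)).re)
        - (((inner ℂ (y₂ x) (h x) : ℂ)).re + ((inner ℂ (deriv y₂ x) (deriv h x) : ℂ)).re
          + ((inner ℂ (deriv (deriv y₂) x) (deriv (deriv h) x) : ℂ)).re)) := by
      rw [H2inner, H2inner, ← intervalIntegral.integral_sub
        (hint1.intervalIntegrable _ _) (hint2.intervalIntegrable _ _)]
    rw [hsub]
    have hpt : ∀ x ∈ Set.Icc (0:ℝ) 1,
        |(((inner ℂ (y₁ x) (h x) : ℂ)).re + ((inner ℂ (deriv y₁ x) (deriv h x) : ℂ)).re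
          + ((inner ℂ (deriv (deriv y₁) x) (deriv (deriv h) x) : ℂ)).re)
        - (((inner ℂ (y₂ x) (h x) : ℂ)).re + ((inner ℂ (deriv y₂ x) (deriv h x) : ℂ)).re
          + ((inner ℂ (deriv (deriv y₂) x) (deriv (deriv h) x) : ℂ)).re)|
        ≤ ‖u x‖ * ‖h x‖ + ‖deriv u x‖ * ‖deriv h x‖
          + ‖deriv (deriv u) x‖ * ‖deriv (deriv h) x‖ := by
      intro x _
      have e0 : ((inner ℂ (y₁ x) (h x) : ℂ)).re - ((inner ℂ (y₂ x) (h x) : ℂ)).re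
          = ((inner ℂ (u x) (h x) : ℂ)).re := by
        rw [show u x = y₁ x - y₂ x from rfl, inner_sub_left, Complex.sub_re]
      have e1 : ((inner ℂ (deriv y₁ x) (deriv h x) : ℂ)).re
          - ((inner ℂ (deriv y₂ x) (deriv h x) : ℂ)).re
          = ((inner ℂ (deriv u x) (deriv h x) : ℂ)).re := by
        rw [hud x, inner_sub_left, Complex.sub_re]
      have e2 : ((inner ℂ (deriv (deriv y₁) x) (deriv (deriv h) x) : ℂ)).re
          - ((inner ℂ (deriv (deriv y₂) x) (deriv (deriv h) x) : ℂ)).re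
          = ((inner ℂ (deriv (deriv u) x) (deriv (deriv h) x) : ℂ)).re := by
        rw [hudd x, inner_sub_left, Complex.sub_re]
      have b0 : |((inner ℂ (u x) (h x) : ℂ)).re| ≤ ‖u x‖ * ‖h x‖ := by
        refine le_trans ?_ (norm_inner_le_norm (𝕜 := ℂ) (u x) (h x))
        exact Complex.abs_re_le_norm _
      have b1 : |((inner ℂ (deriv u x) (deriv h x) : ℂ)).re| ≤ ‖deriv u x‖ * ‖deriv h x‖ := by
        refine le_trans ?_ (norm_inner_le_norm (𝕜 := ℂ) (deriv u x) (deriv h x))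
        exact Complex.abs_re_le_norm _
      have b2 : |((inner ℂ (deriv (deriv u) x) (deriv (deriv h) x) : ℂ)).re|
          ≤ ‖deriv (deriv u) x‖ * ‖deriv (deriv h) x‖ := by
        refine le_trans ?_ (norm_inner_le_norm (𝕜 := ℂ) (deriv (deriv u) x) (deriv (deriv h) x))
        exact Complex.abs_re_le_norm _
      calc |_| = |((inner ℂ (u x) (h x) : ℂ)).re + ((inner ℂ (deriv u x) (deriv h x) : ℂ)).re
            + ((inner ℂ (deriv (deriv u) x) (deriv (deriv h) x) : ℂ)).re| := by
            rw [← e0, ← e1, ← e2]; ring_nf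
        _ ≤ _ := by
            have := abs_add_le (((inner ℂ (u x) (h x) : ℂ)).re
              + ((inner ℂ (deriv u x) (deriv h x) : ℂ)).re)
              (((inner ℂ (deriv (deriv u) x) (deriv (deriv h) x) : ℂ)).re)
            have h2 := abs_add_le (((inner ℂ (u x) (h x) : ℂ)).re)
              (((inner ℂ (deriv u x) (deriv h x) : ℂ)).re)
            linarith only [this, h2, b0, b1, b2]
    have hMd : (∫ x in (0:ℝ)..1, (‖u x‖ * ‖h x‖ + ‖deriv u x‖ * ‖deriv h x‖
        + ‖deriv (deriv u) x‖ * ‖deriv (deriv h) x‖)) ≤ 3 * Hu * Hh := by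
      have i1 : IntervalIntegrable (fun x => ‖u x‖ * ‖h x‖) volume 0 1 :=
        (hcu.norm.mul hch.norm).intervalIntegrable _ _
      have i2 : IntervalIntegrable (fun x => ‖deriv u x‖ * ‖deriv h x‖) volume 0 1 :=
        (hcu'.norm.mul hch'.norm).intervalIntegrable _ _
      have i3 : IntervalIntegrable (fun x => ‖deriv (deriv u) x‖ * ‖deriv (deriv h) x‖)
          volume 0 1 := (hcu''.norm.mul hch''.norm).intervalIntegrable _ _
      rw [intervalIntegral.integral_add (i1.add i2) i3, intervalIntegral.integral_add i1 i2]
      have j1 : (∫ x in (0:ℝ)..1, ‖u x‖ * ‖h x‖) ≤ Hu * Hh :=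
        cs_bound' _ _ hcu hch Hu Hh hHu0 hHh0 hu02 hh02
      have j2 : (∫ x in (0:ℝ)..1, ‖deriv u x‖ * ‖deriv h x‖) ≤ Hu * Hh :=
        cs_bound' _ _ hcu' hch' Hu Hh hHu0 hHh0 hu12 hh12
      have j3 : (∫ x in (0:ℝ)..1, ‖deriv (deriv u) x‖ * ‖deriv (deriv h) x‖) ≤ Hu * Hh :=
        cs_bound' _ _ hcu'' hch'' Hu Hh hHu0 hHh0 hudd2 hhdd2
      linarith only [j1, j2, j3]
    refine le_trans (abs_integral_le_of_le' _ _ (hint1.sub hint2)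
      (((hcu.norm.mul hch.norm).add (hcu'.norm.mul hch'.norm)).add
        (hcu''.norm.mul hch''.norm)) hpt) hMd
  -- Claim A : weighted integral difference
  have hcw : Continuous (fun x : ℝ => Real.exp (-2 * lam * x)) :=
    Real.continuous_exp.comp (continuous_const.mul continuous_id)
  have hcP1 : Continuous (fun x => deriv (deriv h) x
      + (2:ℂ) • B (deriv y₁ x) (deriv h x) + A (deriv h x)) :=
    (hch''.add (((B.continuous.comp hcy1').clm_apply hch').const_smul (2:ℂ))).add
      (A.continuous.comp hch')
  have hcP2 : Continuous (fun x => deriv (deriv h) x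
      + (2:ℂ) • B (deriv y₂ x) (deriv h x) + A (deriv h x)) :=
    (hch''.add (((B.continuous.comp hcy2').clm_apply hch').const_smul (2:ℂ))).add
      (A.continuous.comp hch')
  have hcQ1 : Continuous (fun x => deriv (deriv y₁) x
      + (B (deriv y₁ x) (deriv y₁ x) + A (deriv y₁ x))) :=
    hcy1''.add ((((B.continuous.comp hcy1').clm_apply hcy1')).add (A.continuous.comp hcy1'))
  have hcQ2 : Continuous (fun x => deriv (deriv y₂) x
      + (B (deriv y₂ x) (deriv y₂ x) + A (deriv y₂ x))) :=
    hcy2''.add ((((B.continuous.comp hcy2').clm_apply hcy2')).add (A.continuous.comp hcy2'))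
  have hcF1 : Continuous (fun x =>
      2 * ((inner ℂ (deriv (deriv h) x + (2:ℂ) • B (deriv y₁ x) (deriv h x) + A (deriv h x))
        (deriv (deriv y₁) x + (B (deriv y₁ x) (deriv y₁ x) + A (deriv y₁ x))) : ℂ)).re
        * Real.exp (-2 * lam * x)) :=
    (continuous_const.mul (Complex.continuous_re.comp (hcP1.inner hcQ1))).mul hcw
  have hcF2 : Continuous (fun x =>
      2 * ((inner ℂ (deriv (deriv h) x + (2:ℂ) • B (deriv y₂ x) (deriv h x) + A (deriv h x))
        (deriv (deriv y₂) x + (B (deriv y₂ x) (deriv y₂ x) + A (deriv y₂ x))) : ℂ)).re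
        * Real.exp (-2 * lam * x)) :=
    (continuous_const.mul (Complex.continuous_re.comp (hcP2.inner hcQ2))).mul hcw
  set M : ℝ → ℝ := fun x => 4 * nB * su * sh * ‖deriv (deriv y₁) x‖ + 4 * nB * su * sh * c0
    + 2 * (‖deriv (deriv h) x‖ * ‖deriv (deriv u) x‖) + 2 * c1 * su * ‖deriv (deriv h) x‖
    + 2 * c1 * sh * ‖deriv (deriv u) x‖ + 2 * c1 ^ 2 * sh * su with hMdef
  have hcM : Continuous M := by
    rw [hMdef]
    exact (((((continuous_const.mul hcy1''.norm).add continuous_const).add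
      (continuous_const.mul (hch''.norm.mul hcu''.norm))).add
      (continuous_const.mul hch''.norm)).add
      (continuous_const.mul hcu''.norm)).add continuous_const
  have hconst1 : (0:ℝ) ≤ 2 * nB * su * sh :=
    mul_nonneg (mul_nonneg (mul_nonneg (by norm_num) hnB) hsu0) hsh0
  have hMbound : (∫ x in (0:ℝ)..1, M x) ≤ K * Hu * Hh := by
    have i1 : IntervalIntegrable (fun x => 4 * nB * su * sh * ‖deriv (deriv y₁) x‖) volume 0 1 :=
      (continuous_const.mul hcy1''.norm).intervalIntegrable _ _
    have i2 : IntervalIntegrable (fun _ : ℝ => 4 * nB * su * sh * c0) volume 0 1 :=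
      intervalIntegrable_const
    have i3 : IntervalIntegrable
        (fun x => 2 * (‖deriv (deriv h) x‖ * ‖deriv (deriv u) x‖)) volume 0 1 :=
      (continuous_const.mul (hch''.norm.mul hcu''.norm)).intervalIntegrable _ _
    have i4 : IntervalIntegrable (fun x => 2 * c1 * su * ‖deriv (deriv h) x‖) volume 0 1 :=
      (continuous_const.mul hch''.norm).intervalIntegrable _ _
    have i5 : IntervalIntegrable (fun x => 2 * c1 * sh * ‖deriv (deriv u) x‖) volume 0 1 :=
      (continuous_const.mul hcu''.norm).intervalIntegrable _ _
    have i6 : IntervalIntegrable (fun _ : ℝ => 2 * c1 ^ 2 * sh * su) volume 0 1 :=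
      intervalIntegrable_const
    have eM : (∫ x in (0:ℝ)..1, M x)
        = 4 * nB * su * sh * (∫ x in (0:ℝ)..1, ‖deriv (deriv y₁) x‖) + 4 * nB * su * sh * c0
          + 2 * (∫ x in (0:ℝ)..1, ‖deriv (deriv h) x‖ * ‖deriv (deriv u) x‖)
          + 2 * c1 * su * (∫ x in (0:ℝ)..1, ‖deriv (deriv h) x‖)
          + 2 * c1 * sh * (∫ x in (0:ℝ)..1, ‖deriv (deriv u) x‖) + 2 * c1 ^ 2 * sh * su := by
      simp only [hMdef]
      rw [intervalIntegral.integral_add ((((i1.add i2).add i3).add i4).add i5) i6,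
        intervalIntegral.integral_add (((i1.add i2).add i3).add i4) i5,
        intervalIntegral.integral_add ((i1.add i2).add i3) i4,
        intervalIntegral.integral_add (i1.add i2) i3,
        intervalIntegral.integral_add i1 i2,
        intervalIntegral.integral_const_mul, intervalIntegral.integral_const_mul,
        intervalIntegral.integral_const_mul, intervalIntegral.integral_const_mul,
        intervalIntegral.integral_const]
      norm_num
    rw [eM]
    have b1 : 4 * nB * su * sh * (∫ x in (0:ℝ)..1, ‖deriv (deriv y₁) x‖)
        ≤ 4 * nB * su * sh * R := mul_le_mul_of_nonneg_left hIy1 (by linarith only [hconst1])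
    have b3 : 2 * (∫ x in (0:ℝ)..1, ‖deriv (deriv h) x‖ * ‖deriv (deriv u) x‖)
        ≤ 2 * (Hh * Hu) := by linarith only [hIhu]
    have b4 : 2 * c1 * su * (∫ x in (0:ℝ)..1, ‖deriv (deriv h) x‖) ≤ 2 * c1 * su * Hh :=
      mul_le_mul_of_nonneg_left hIh
        (mul_nonneg (mul_nonneg (by norm_num) hc1) hsu0)
    have b5 : 2 * c1 * sh * (∫ x in (0:ℝ)..1, ‖deriv (deriv u) x‖) ≤ 2 * c1 * sh * Hu :=
      mul_le_mul_of_nonneg_left hIu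
        (mul_nonneg (mul_nonneg (by norm_num) hc1) hsh0)
    have efin : 4 * nB * su * sh * R + 4 * nB * su * sh * c0 + 2 * (Hh * Hu)
        + 2 * c1 * su * Hh + 2 * c1 * sh * Hu + 2 * c1 ^ 2 * sh * su = K * Hu * Hh := by
      rw [hsudef, hshdef, hKdef]
      linear_combination (4 * nB * R * Hu * Hh + 4 * nB * c0 * Hu * Hh
        + 2 * c1 ^ 2 * Hu * Hh) * hsq2
    linarith only [b1, b3, b4, b5, efin]
  have claimA : |(∫ x in (0:ℝ)..1,
      2 * ((inner ℂ (deriv (deriv h) x + (2:ℂ) • B (deriv y₁ x) (deriv h x) + A (deriv h x))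
        (deriv (deriv y₁) x + (B (deriv y₁ x) (deriv y₁ x) + A (deriv y₁ x))) : ℂ)).re
        * Real.exp (-2 * lam * x))
      - (∫ x in (0:ℝ)..1,
      2 * ((inner ℂ (deriv (deriv h) x + (2:ℂ) • B (deriv y₂ x) (deriv h x) + A (deriv h x))
        (deriv (deriv y₂) x + (B (deriv y₂ x) (deriv y₂ x) + A (deriv y₂ x))) : ℂ)).re
        * Real.exp (-2 * lam * x))| ≤ K * Hu * Hh := by
    rw [← intervalIntegral.integral_sub (hcF1.intervalIntegrable _ _)
      (hcF2.intervalIntegrable _ _)]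
    refine le_trans (abs_integral_le_of_le' _ M (hcF1.sub hcF2) hcM ?_) hMbound
    intro x hx
    have ha1 : ‖deriv y₁ x‖ ≤ SR := hby1 x hx
    have ha2 : ‖deriv y₂ x‖ ≤ SR := hby2 x hx
    have hbh' : ‖deriv h x‖ ≤ sh := hbh x hx
    have hbu' : ‖deriv y₁ x - deriv y₂ x‖ ≤ su := by rw [← hud x]; exact hbu x hx
    have hwx0 : (0:ℝ) < Real.exp (-2 * lam * x) := Real.exp_pos _
    have hwx1 : Real.exp (-2 * lam * x) ≤ 1 := by
      rw [Real.exp_le_one_iff]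
      have hxx : 0 ≤ 2 * lam * x := mul_nonneg (by linarith only [hlam]) hx.1
      linarith only [hxx]
    set p1 := deriv (deriv h) x + (2:ℂ) • B (deriv y₁ x) (deriv h x) + A (deriv h x) with hp1def
    set p2 := deriv (deriv h) x + (2:ℂ) • B (deriv y₂ x) (deriv h x) + A (deriv h x) with hp2def
    set q1 := deriv (deriv y₁) x + (B (deriv y₁ x) (deriv y₁ x) + A (deriv y₁ x)) with hq1def
    set q2 := deriv (deriv y₂) x + (B (deriv y₂ x) (deriv y₂ x) + A (deriv y₂ x)) with hq2def
    have hq : (inner ℂ p1 q1 : ℂ) - inner ℂ p2 q2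
        = (inner ℂ (p1 - p2) q1 : ℂ) + (inner ℂ p2 (q1 - q2) : ℂ) := by
      rw [inner_sub_left, inner_sub_right]; ring
    have hkey1 : p1 - p2 = (2:ℂ) • B (deriv y₁ x - deriv y₂ x) (deriv h x) := by
      have e : B (deriv y₁ x - deriv y₂ x) (deriv h x)
          = B (deriv y₁ x) (deriv h x) - B (deriv y₂ x) (deriv h x) := by
        rw [map_sub]; rfl
      rw [hp1def, hp2def, e, smul_sub]; abel
    have hn1 : ‖p1 - p2‖ ≤ 2 * nB * su * sh := by
      rw [hkey1, norm_smul]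
      have h2n : ‖(2:ℂ)‖ = 2 := by norm_num
      rw [h2n]
      have hb := B.le_opNorm₂ (deriv y₁ x - deriv y₂ x) (deriv h x)
      have m1 : nB * ‖deriv y₁ x - deriv y₂ x‖ * ‖deriv h x‖ ≤ nB * su * sh :=
        mul_le_mul (mul_le_mul_of_nonneg_left hbu' hnB) hbh' (norm_nonneg _)
          (mul_nonneg hnB hsu0)
      linarith only [hb, m1, hnBdef]
    have hn2 : ‖q1‖ ≤ ‖deriv (deriv y₁) x‖ + c0 := by
      have b1 := B.le_opNorm₂ (deriv y₁ x) (deriv y₁ x)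
      have b2 := A.le_opNorm (deriv y₁ x)
      have m1 : nB * ‖deriv y₁ x‖ * ‖deriv y₁ x‖ ≤ nB * SR * SR :=
        mul_le_mul (mul_le_mul_of_nonneg_left ha1 hnB) ha1 (norm_nonneg _)
          (mul_nonneg hnB hSR)
      have m2 : nA * ‖deriv y₁ x‖ ≤ nA * SR := mul_le_mul_of_nonneg_left ha1 hnA
      have tri1 : ‖q1‖ ≤ ‖deriv (deriv y₁) x‖
          + ‖B (deriv y₁ x) (deriv y₁ x) + A (deriv y₁ x)‖ := by
        rw [hq1def]; exact norm_add_le _ _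
      have tri2 : ‖B (deriv y₁ x) (deriv y₁ x) + A (deriv y₁ x)‖
          ≤ ‖B (deriv y₁ x) (deriv y₁ x)‖ + ‖A (deriv y₁ x)‖ := norm_add_le _ _
      have ec0 : c0 = nB * SR * SR + nA * SR := by rw [hc0def]; ring
      linarith only [b1, b2, m1, m2, tri1, tri2, ec0, hnBdef, hnAdef]
    have hn3 : ‖p2‖ ≤ ‖deriv (deriv h) x‖ + c1 * sh := by
      have b1 := B.le_opNorm₂ (deriv y₂ x) (deriv h x)
      have b2 := A.le_opNorm (deriv h x)
      have m1 : nB * ‖deriv y₂ x‖ * ‖deriv h x‖ ≤ nB * SR * sh :=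
        mul_le_mul (mul_le_mul_of_nonneg_left ha2 hnB) hbh' (norm_nonneg _)
          (mul_nonneg hnB hSR)
      have m2 : nA * ‖deriv h x‖ ≤ nA * sh := mul_le_mul_of_nonneg_left hbh' hnA
      have tri1 : ‖p2‖ ≤ ‖deriv (deriv h) x + (2:ℂ) • B (deriv y₂ x) (deriv h x)‖
          + ‖A (deriv h x)‖ := by rw [hp2def]; exact norm_add_le _ _
      have tri2 : ‖deriv (deriv h) x + (2:ℂ) • B (deriv y₂ x) (deriv h x)‖
          ≤ ‖deriv (deriv h) x‖ + ‖(2:ℂ) • B (deriv y₂ x) (deriv h x)‖ := norm_add_le _ _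
      have e2 : ‖(2:ℂ) • B (deriv y₂ x) (deriv h x)‖ = 2 * ‖B (deriv y₂ x) (deriv h x)‖ := by
        rw [norm_smul]; norm_num
      have ec1 : c1 * sh = 2 * (nB * SR * sh) + nA * sh := by rw [hc1def]; ring
      linarith only [b1, b2, m1, m2, tri1, tri2, e2, ec1, hnBdef, hnAdef]
    have hn4 : ‖q1 - q2‖ ≤ ‖deriv (deriv u) x‖ + c1 * su := by
      have hkey2 : q1 - q2 = (deriv (deriv y₁) x - deriv (deriv y₂) x)
          + (B (deriv y₁ x - deriv y₂ x) (deriv y₁ x)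
            + (B (deriv y₂ x) (deriv y₁ x - deriv y₂ x) + A (deriv y₁ x - deriv y₂ x))) := by
        have e1 : B (deriv y₁ x - deriv y₂ x) (deriv y₁ x)
            = B (deriv y₁ x) (deriv y₁ x) - B (deriv y₂ x) (deriv y₁ x) := by
          rw [map_sub]; rfl
        have e2 : B (deriv y₂ x) (deriv y₁ x - deriv y₂ x)
            = B (deriv y₂ x) (deriv y₁ x) - B (deriv y₂ x) (deriv y₂ x) := map_sub _ _ _
        have e3 : A (deriv y₁ x - deriv y₂ x) = A (deriv y₁ x) - A (deriv y₂ x) := map_sub _ _ _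
        rw [hq1def, hq2def, e1, e2, e3]; abel
      have b1 := B.le_opNorm₂ (deriv y₁ x - deriv y₂ x) (deriv y₁ x)
      have b2 := B.le_opNorm₂ (deriv y₂ x) (deriv y₁ x - deriv y₂ x)
      have b3 := A.le_opNorm (deriv y₁ x - deriv y₂ x)
      have m1 : nB * ‖deriv y₁ x - deriv y₂ x‖ * ‖deriv y₁ x‖ ≤ nB * su * SR :=
        mul_le_mul (mul_le_mul_of_nonneg_left hbu' hnB) ha1 (norm_nonneg _)
          (mul_nonneg hnB hsu0)
      have m2 : nB * ‖deriv y₂ x‖ * ‖deriv y₁ x - deriv y₂ x‖ ≤ nB * SR * su :=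
        mul_le_mul (mul_le_mul_of_nonneg_left ha2 hnB) hbu' (norm_nonneg _)
          (mul_nonneg hnB hSR)
      have m3 : nA * ‖deriv y₁ x - deriv y₂ x‖ ≤ nA * su := mul_le_mul_of_nonneg_left hbu' hnA
      have tri1 : ‖q1 - q2‖ ≤ ‖deriv (deriv y₁) x - deriv (deriv y₂) x‖
          + ‖B (deriv y₁ x - deriv y₂ x) (deriv y₁ x)
            + (B (deriv y₂ x) (deriv y₁ x - deriv y₂ x) + A (deriv y₁ x - deriv y₂ x))‖ := by
        rw [hkey2]; exact norm_add_le _ _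
      have tri2 : ‖B (deriv y₁ x - deriv y₂ x) (deriv y₁ x)
            + (B (deriv y₂ x) (deriv y₁ x - deriv y₂ x) + A (deriv y₁ x - deriv y₂ x))‖
          ≤ ‖B (deriv y₁ x - deriv y₂ x) (deriv y₁ x)‖
            + (‖B (deriv y₂ x) (deriv y₁ x - deriv y₂ x)‖ + ‖A (deriv y₁ x - deriv y₂ x)‖) := by
        refine le_trans (norm_add_le _ _) ?_
        exact add_le_add le_rfl (norm_add_le _ _)
      have ec1 : c1 * su = nB * su * SR + nB * SR * su + nA * su := by rw [hc1def]; ring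
      rw [hudd x]
      linarith only [b1, b2, b3, m1, m2, m3, tri1, tri2, ec1, hnBdef, hnAdef]
    have hip1 : ‖(inner ℂ (p1 - p2) q1 : ℂ)‖
        ≤ (2 * nB * su * sh) * (‖deriv (deriv y₁) x‖ + c0) :=
      le_trans (norm_inner_le_norm _ _)
        (mul_le_mul hn1 hn2 (norm_nonneg _) hconst1)
    have hip2 : ‖(inner ℂ p2 (q1 - q2) : ℂ)‖
        ≤ (‖deriv (deriv h) x‖ + c1 * sh) * (‖deriv (deriv u) x‖ + c1 * su) :=
      le_trans (norm_inner_le_norm _ _)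
        (mul_le_mul hn3 hn4 (norm_nonneg _)
          (add_nonneg (norm_nonneg _) (mul_nonneg hc1 hsh0)))
    have hre : |((inner ℂ p1 q1 : ℂ)).re - ((inner ℂ p2 q2 : ℂ)).re|
        ≤ ‖(inner ℂ (p1 - p2) q1 : ℂ)‖ + ‖(inner ℂ p2 (q1 - q2) : ℂ)‖ := by
      have e : ((inner ℂ p1 q1 : ℂ)).re - ((inner ℂ p2 q2 : ℂ)).re
          = ((inner ℂ (p1 - p2) q1 : ℂ) + (inner ℂ p2 (q1 - q2) : ℂ)).re := by
        rw [← Complex.sub_re, hq]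
      rw [e]
      refine le_trans ?_ (norm_add_le _ _)
      exact Complex.abs_re_le_norm _
    have efin : 2 * ((inner ℂ p1 q1 : ℂ)).re * Real.exp (-2 * lam * x)
        - 2 * ((inner ℂ p2 q2 : ℂ)).re * Real.exp (-2 * lam * x)
        = 2 * (((inner ℂ p1 q1 : ℂ)).re - ((inner ℂ p2 q2 : ℂ)).re)
          * Real.exp (-2 * lam * x) := by ring
    rw [efin, abs_mul, abs_mul]
    have habs2 : |(2:ℝ)| = 2 := by norm_num
    rw [habs2, abs_of_pos hwx0]
    have hS : 2 * |((inner ℂ p1 q1 : ℂ)).re - ((inner ℂ p2 q2 : ℂ)).re|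
        ≤ 2 * ((2 * nB * su * sh) * (‖deriv (deriv y₁) x‖ + c0)
          + (‖deriv (deriv h) x‖ + c1 * sh) * (‖deriv (deriv u) x‖ + c1 * su)) := by
      linarith only [hre, hip1, hip2]
    have hSnn : (0:ℝ) ≤ 2 * ((2 * nB * su * sh) * (‖deriv (deriv y₁) x‖ + c0)
        + (‖deriv (deriv h) x‖ + c1 * sh) * (‖deriv (deriv u) x‖ + c1 * su)) := by
      have w1 : (0:ℝ) ≤ (2 * nB * su * sh) * (‖deriv (deriv y₁) x‖ + c0) :=
        mul_nonneg hconst1 (add_nonneg (norm_nonneg _) hc0)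
      have w2 : (0:ℝ) ≤ (‖deriv (deriv h) x‖ + c1 * sh) * (‖deriv (deriv u) x‖ + c1 * su) :=
        mul_nonneg (add_nonneg (norm_nonneg _) (mul_nonneg hc1 hsh0))
          (add_nonneg (norm_nonneg _) (mul_nonneg hc1 hsu0))
      linarith only [w1, w2]
    calc 2 * |((inner ℂ p1 q1 : ℂ)).re - ((inner ℂ p2 q2 : ℂ)).re| * Real.exp (-2 * lam * x)
        ≤ (2 * ((2 * nB * su * sh) * (‖deriv (deriv y₁) x‖ + c0)
          + (‖deriv (deriv h) x‖ + c1 * sh) * (‖deriv (deriv u) x‖ + c1 * su))) * 1 :=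
          mul_le_mul hS hwx1 hwx0.le hSnn
      _ = M x := by rw [hMdef]; ring
  unfold Lfun
  exact halg _ _ _ _ claimA claimB
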